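/- Let α ∈ (1,2), d ≥ 2. There exist constants c_1, c_2 > 0 such that for all positive ρ_y, ρ_z, r, t satisfying ρ_y ≤ ρ_z/2, ρ_z/2 ≤ r ≤ (t/2)^{1/α}: ∫_0^{t/2} s^{-1/α} min(1, ρ_y^{α/2}/√s) min(s^{-d/α}, s/r^{d+α}) ds is bounded above by c_1 · ( ρ_y^{α/2}/( √t · r^{d+1-α/2} · t^{-1/2} )) in the sense that, after multiplying by ρ_z^{α/2}/√t, the result is at most c_2 · ( ρ_z^{α/2} ρ_y^{α/2} / (√t · r^{d+1-α/2}) ). -/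

import Mathlib

open MeasureTheory Set

theorem stmt_7 (d : ℕ) (hd : 2 ≤ d) (α : ℝ) (hα : 1 < α ∧ α < 2) :
    ∃ c₁ > 0, ∃ c₂ > 0, ∀ (ρy ρz r t : ℝ),
      0 < ρy → 0 < ρz → 0 < r → 0 < t →
      ρy ≤ ρz / 2 → ρz / 2 ≤ r → r ≤ (t/2) ^ (1/α) →
      (∫ s in Ioo (0:ℝ) (t/2),
          s ^ (-(1/α)) * min 1 (ρy ^ (α/2) / Real.sqrt s)
            * min (s ^ (-(d:ℝ)/α)) (s / r ^ ((d:ℝ) + α)))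
        ≤ c₁ * (ρy ^ (α/2) / r ^ ((d:ℝ) + 1 - α/2))
      ∧ (ρz ^ (α/2) / Real.sqrt t) *
          (∫ s in Ioo (0:ℝ) (t/2),
            s ^ (-(1/α)) * min 1 (ρy ^ (α/2) / Real.sqrt s)
              * min (s ^ (-(d:ℝ)/α)) (s / r ^ ((d:ℝ) + α)))
        ≤ c₂ * (ρz ^ (α/2) * ρy ^ (α/2) / (Real.sqrt t * r ^ ((d:ℝ) + 1 - α/2))) := by
  obtain ⟨hα1, hα2⟩ := hα
  have hα0 : 0 < α := by linarith
  set p : ℝ := 1/2 - 1/α with hp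
  set q : ℝ := -(1/α) - 1/2 - (d:ℝ)/α with hq
  have hd3 : (3:ℝ) ≤ (d:ℝ) + 1 := by
    have : (2:ℝ) ≤ (d:ℝ) := by exact_mod_cast hd
    linarith
  have hinvα : 1/α < 1 := by rw [div_lt_one hα0]; linarith
  have hp1 : 0 < p + 1 := by simp only [hp]; linarith
  have hpm1 : -1 < p := by linarith
  have hq1 : q + 1 < -1 := by
    have h1 : (3:ℝ)/α ≤ ((d:ℝ)+1)/α := by gcongr
    have h2 : (3:ℝ)/2 < 3/α := by rw [div_lt_div_iff₀ (by norm_num) hα0]; linarith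
    have h3 : q + 1 = 1/2 - ((d:ℝ)+1)/α := by
      simp only [hq]; field_simp; ring
    rw [h3]; linarith
  have hqm1 : q < -1 := by linarith
  have hq0 : q + 1 ≠ 0 := by linarith
  have hcpos : 0 < 1/(p+1) - 1/(q+1) := by
    have h1 : 1/(q+1) < 0 := one_div_neg.mpr (by linarith)
    have h2 : 0 < 1/(p+1) := by positivity
    linarith
  refine ⟨1/(p+1) - 1/(q+1), hcpos, 1/(p+1) - 1/(q+1), hcpos, ?_⟩
  intro ρy ρz r t hρy hρz hr ht hyz hzr hrt
  set a : ℝ := r ^ α with ha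
  have ha0 : 0 < a := Real.rpow_pos_of_pos hr α
  have hat : a ≤ t/2 := by
    have h1 : r ^ α ≤ ((t/2) ^ (1/α)) ^ α := by gcongr
    rwa [← Real.rpow_mul (by linarith : (0:ℝ) ≤ t/2), one_div_mul_cancel hα0.ne',
      Real.rpow_one] at h1
  have hR : 0 < r ^ ((d:ℝ) + α) := Real.rpow_pos_of_pos hr _
  set c : ℝ := ρy ^ (α/2) with hc
  have hc0 : 0 < c := Real.rpow_pos_of_pos hρy _
  set G : ℝ → ℝ := fun s => if s ≤ a then c * s ^ p / r ^ ((d:ℝ) + α) else c * s ^ q with hG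
  -- integrability pieces
  have hint1 : IntegrableOn (fun s : ℝ => c * s ^ p / r ^ ((d:ℝ) + α)) (Ioc 0 a) := by
    have := (intervalIntegral.intervalIntegrable_rpow' (a := 0) (b := a) hpm1).1
    exact (this.const_mul c).div_const _
  have hint2i : IntegrableOn (fun s : ℝ => c * s ^ q) (Ioi a) :=
    (integrableOn_Ioi_rpow_of_lt hqm1 ha0).const_mul c
  have hint2 : IntegrableOn (fun s : ℝ => c * s ^ q) (Ioc a (t/2)) :=
    hint2i.mono_set Ioc_subset_Ioi_self
  have hG1 : IntegrableOn G (Ioc 0 a) := by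
    refine hint1.congr_fun (fun s hs => ?_) measurableSet_Ioc
    simp [hG, hs.2]
  have hG2 : IntegrableOn G (Ioc a (t/2)) := by
    refine hint2.congr_fun (fun s hs => ?_) measurableSet_Ioc
    simp [hG, not_le.mpr hs.1]
  have hGint : IntegrableOn G (Ioo 0 (t/2)) := by
    refine IntegrableOn.mono_set ?_ (?_ : Ioo (0:ℝ) (t/2) ⊆ Ioc 0 a ∪ Ioc a (t/2))
    · exact integrableOn_union.mpr ⟨hG1, hG2⟩
    · rw [Ioc_union_Ioc_eq_Ioc ha0.le hat]
      exact Ioo_subset_Ioc_self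
  -- pointwise bound
  have hFG : ∀ s ∈ Ioo (0:ℝ) (t/2),
      s ^ (-(1/α)) * min 1 (c / Real.sqrt s) * min (s ^ (-(d:ℝ)/α)) (s / r ^ ((d:ℝ) + α))
        ≤ G s := by
    intro s hs
    have hs0 : 0 < s := hs.1
    have hsq : Real.sqrt s = s ^ (1/2 : ℝ) := Real.sqrt_eq_rpow s
    by_cases hsa : s ≤ a
    · have step : s ^ (-(1/α)) * min 1 (c / Real.sqrt s) * min (s ^ (-(d:ℝ)/α)) (s / r ^ ((d:ℝ) + α))
          ≤ s ^ (-(1/α)) * (c / Real.sqrt s) * (s / r ^ ((d:ℝ) + α)) := by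
        have h1 : (0:ℝ) ≤ s ^ (-(1/α)) := (Real.rpow_pos_of_pos hs0 _).le
        have h2 : (0:ℝ) ≤ c / Real.sqrt s := by positivity
        have h3 : (0:ℝ) ≤ s / r ^ ((d:ℝ) + α) := by positivity
        exact mul_le_mul (mul_le_mul le_rfl (min_le_right _ _) (le_min (by norm_num) h2) h1)
          (min_le_right _ _) (le_min ((Real.rpow_pos_of_pos hs0 _).le) h3)
          (by positivity)
      refine step.trans_eq ?_
      have hpow : s ^ (-(1/α)) * s ^ (-(1/2):ℝ) * s ^ (1:ℝ) = s ^ p := by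
        rw [← Real.rpow_add hs0, ← Real.rpow_add hs0]
        congr 1
        simp only [hp]; ring
      simp only [hG, if_pos hsa]
      rw [hsq, ← hpow, Real.rpow_neg hs0.le (1/2 : ℝ), Real.rpow_one]
      field_simp
    · have step : s ^ (-(1/α)) * min 1 (c / Real.sqrt s) * min (s ^ (-(d:ℝ)/α)) (s / r ^ ((d:ℝ) + α))
          ≤ s ^ (-(1/α)) * (c / Real.sqrt s) * s ^ (-(d:ℝ)/α) := by
        have h1 : (0:ℝ) ≤ s ^ (-(1/α)) := (Real.rpow_pos_of_pos hs0 _).le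
        have h2 : (0:ℝ) ≤ c / Real.sqrt s := by positivity
        have h3 : (0:ℝ) ≤ s / r ^ ((d:ℝ) + α) := by positivity
        exact mul_le_mul (mul_le_mul le_rfl (min_le_right _ _) (le_min (by norm_num) h2) h1)
          (min_le_left _ _) (le_min ((Real.rpow_pos_of_pos hs0 _).le) h3)
          (by positivity)
      refine step.trans_eq ?_
      have hpow : s ^ (-(1/α)) * s ^ (-(1/2):ℝ) * s ^ (-(d:ℝ)/α) = s ^ q := by
        rw [← Real.rpow_add hs0, ← Real.rpow_add hs0]
        congr 1
        simp only [hq]; ring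
      simp only [hG, if_neg hsa]
      rw [hsq, ← hpow, Real.rpow_neg hs0.le (1/2 : ℝ)]
      field_simp
  -- step 1
  have step1 : (∫ s in Ioo (0:ℝ) (t/2),
      s ^ (-(1/α)) * min 1 (c / Real.sqrt s) * min (s ^ (-(d:ℝ)/α)) (s / r ^ ((d:ℝ) + α)))
      ≤ ∫ s in Ioo (0:ℝ) (t/2), G s := by
    refine integral_mono_of_nonneg ?_ hGint ?_
    · refine (ae_restrict_iff' measurableSet_Ioo).mpr (Filter.Eventually.of_forall ?_)
      intro s hs
      have hs0 : 0 < s := hs.1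
      have h2 : (0:ℝ) ≤ c / Real.sqrt s := by positivity
      have h3 : (0:ℝ) ≤ s / r ^ ((d:ℝ) + α) := by positivity
      exact mul_nonneg (mul_nonneg (Real.rpow_pos_of_pos hs0 _).le
        (le_min (by norm_num) h2)) (le_min (Real.rpow_pos_of_pos hs0 _).le h3)
    · exact (ae_restrict_iff' measurableSet_Ioo).mpr (Filter.Eventually.of_forall hFG)
  -- step 2
  have step2 : (∫ s in Ioo (0:ℝ) (t/2), G s)
      = (∫ s in Ioc (0:ℝ) a, G s) + ∫ s in Ioc a (t/2), G s := by
    rw [← integral_Ioc_eq_integral_Ioo, ← Ioc_union_Ioc_eq_Ioc ha0.le hat,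
      setIntegral_union (Ioc_disjoint_Ioc_of_le le_rfl) measurableSet_Ioc hG1 hG2]
  -- step 3
  have step3 : (∫ s in Ioc (0:ℝ) a, G s) = c / r ^ ((d:ℝ) + α) * (a ^ (p+1) / (p+1)) := by
    rw [setIntegral_congr_fun (g := fun s : ℝ => c / r ^ ((d:ℝ) + α) * s ^ p)
      measurableSet_Ioc ?_]
    · rw [integral_const_mul, ← intervalIntegral.integral_of_le ha0.le,
        integral_rpow (Or.inl hpm1), Real.zero_rpow (by linarith : p + 1 ≠ 0)]
      ring
    · intro s hs
      simp only [hG, if_pos hs.2]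
      ring
  -- step 4
  have step4 : (∫ s in Ioc a (t/2), G s) ≤ c * (-(a ^ (q+1)) / (q+1)) := by
    have e1 : (∫ s in Ioc a (t/2), G s) = ∫ s in Ioc a (t/2), c * s ^ q := by
      refine setIntegral_congr_fun measurableSet_Ioc (fun s hs => ?_)
      simp [hG, not_le.mpr hs.1]
    rw [e1]
    have e2 : (∫ s in Ioc a (t/2), c * s ^ q) ≤ ∫ s in Ioi a, c * s ^ q := by
      refine setIntegral_mono_set hint2i ?_ (HasSubset.Subset.eventuallyLE Ioc_subset_Ioi_self)
      refine (ae_restrict_iff' measurableSet_Ioi).mpr (Filter.Eventually.of_forall ?_)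
      intro s hs
      exact mul_nonneg hc0.le (Real.rpow_pos_of_pos (ha0.trans hs) _).le
    refine e2.trans_eq ?_
    rw [integral_const_mul, integral_Ioi_rpow_of_lt hqm1 ha0]
  -- arithmetic
  have hE : 0 < r ^ ((d:ℝ) + 1 - α/2) := Real.rpow_pos_of_pos hr _
  have key : c / r ^ ((d:ℝ)+α) * (a ^ (p+1) / (p+1)) + c * (-(a ^ (q+1)) / (q+1))
      = (1/(p+1) - 1/(q+1)) * (c / r ^ ((d:ℝ)+1-α/2)) := by
    have eb1 : a ^ (p+1) = r ^ (-((d:ℝ)+1-α/2)) * r ^ ((d:ℝ)+α) := by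
      rw [ha, ← Real.rpow_mul hr.le, ← Real.rpow_add hr]
      congr 1
      simp only [hp]; field_simp; ring
    have eb2 : a ^ (q+1) = r ^ (-((d:ℝ)+1-α/2)) := by
      rw [ha, ← Real.rpow_mul hr.le]
      congr 1
      simp only [hq]; field_simp; ring
    rw [eb1, eb2, Real.rpow_neg hr.le]
    field_simp
    ring
  have main : (∫ s in Ioo (0:ℝ) (t/2),
      s ^ (-(1/α)) * min 1 (c / Real.sqrt s) * min (s ^ (-(d:ℝ)/α)) (s / r ^ ((d:ℝ) + α)))
      ≤ (1/(p+1) - 1/(q+1)) * (c / r ^ ((d:ℝ)+1-α/2)) := by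
    calc _ ≤ ∫ s in Ioo (0:ℝ) (t/2), G s := step1
      _ = (∫ s in Ioc (0:ℝ) a, G s) + ∫ s in Ioc a (t/2), G s := step2
      _ ≤ c / r ^ ((d:ℝ)+α) * (a ^ (p+1) / (p+1)) + c * (-(a ^ (q+1)) / (q+1)) := by
          rw [step3]; exact add_le_add_right step4 _
      _ = _ := key
  refine ⟨main, ?_⟩
  have hst : 0 < Real.sqrt t := Real.sqrt_pos.mpr ht
  have hz0 : (0:ℝ) ≤ ρz ^ (α/2) / Real.sqrt t := by positivity
  calc (ρz ^ (α/2) / Real.sqrt t) * _ ≤ (ρz ^ (α/2) / Real.sqrt t) *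
        ((1/(p+1) - 1/(q+1)) * (c / r ^ ((d:ℝ)+1-α/2))) :=
      mul_le_mul_of_nonneg_left main hz0
    _ = (1/(p+1) - 1/(q+1)) * (ρz ^ (α/2) * c / (Real.sqrt t * r ^ ((d:ℝ)+1-α/2))) := by
      field_simp
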